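/- There is no ℚ-bialgebra structure (Δ̃, ε̃) on the free ℚ-algebra A = ℚ⟨y₁, y₂, y₃⟩, graded with each yᵣ in degree 1 and with Δ̃ and ε̃ being algebra maps respecting the grading in the sense that Δ̃(Aₙ) ⊆ ⊕_{i+j=n} Aᵢ ⊗ Aⱼ, such that Δ̃(eᵣ) = ∑_{i+j=r} eᵢ ⊗ eⱼ for r = 1, 2, 3, where e₀ = 1, e₁ = y₁+y₂+y₃, e₂ = y₃y₂ + y₃y₁ + y₂y₁, e₃ = y₃y₂y₁. -/

import Mathlib

open TensorProduct

noncomputable section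

abbrev A3 := FreeAlgebra ℚ (Fin 3)

def y (r : Fin 3) : A3 := FreeAlgebra.ι ℚ r

def A3one : Submodule ℚ A3 := Submodule.span ℚ (Set.range (FreeAlgebra.ι ℚ))

def deg (n : ℕ) : Submodule ℚ A3 := A3one ^ n

def P (i j : ℕ) : Submodule ℚ (A3 ⊗[ℚ] A3) :=
  LinearMap.range (TensorProduct.map (deg i).subtype (deg j).subtype)

def e1 : A3 := y 0 + y 1 + y 2
def e2 : A3 := y 2 * y 1 + y 2 * y 0 + y 1 * y 0
def e3 : A3 := y 2 * y 1 * y 0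

instance : DecidableEq (FreeMonoid (Fin 3)) := inferInstanceAs (DecidableEq (List (Fin 3)))

def E : A3 ≃ₐ[ℚ] MonoidAlgebra ℚ (FreeMonoid (Fin 3)) := FreeAlgebra.equivMonoidAlgebraFreeMonoid

def coeffAt (w : FreeMonoid (Fin 3)) : A3 →ₗ[ℚ] ℚ where
  toFun x := (E x).coeff w
  map_add' x z := by simp [map_add]
  map_smul' c x := by simp [map_smul]

lemma E_y (r : Fin 3) : E (y r) = MonoidAlgebra.single (FreeMonoid.of r) 1 := by
  simp [E, y, FreeAlgebra.equivMonoidAlgebraFreeMonoid, MonoidAlgebra.of_apply]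

lemma coeffAt_y (w : FreeMonoid (Fin 3)) (r : Fin 3) :
    coeffAt w (y r) = if FreeMonoid.of r = w then 1 else 0 := by
  simp [coeffAt, E_y, MonoidAlgebra.coeff_single, Finsupp.single_apply]

lemma coeffAt_one (w : FreeMonoid (Fin 3)) :
    coeffAt w (1 : A3) = if (1 : FreeMonoid (Fin 3)) = w then 1 else 0 := by
  have : E (1:A3) = MonoidAlgebra.single 1 1 := by simp [E]; rfl
  simp [coeffAt, this, MonoidAlgebra.coeff_single, Finsupp.single_apply]

lemma coeffAt_yy (w : FreeMonoid (Fin 3)) (r s : Fin 3) :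
    coeffAt w (y r * y s) = if FreeMonoid.of r * FreeMonoid.of s = w then 1 else 0 := by
  have : E (y r * y s) = MonoidAlgebra.single (FreeMonoid.of r * FreeMonoid.of s) 1 := by
    rw [map_mul, E_y, E_y, MonoidAlgebra.single_mul_single, one_mul]
  simp [coeffAt, this, MonoidAlgebra.coeff_single, Finsupp.single_apply]

/-- coefficient of the word `y 0`. -/
def f : A3 →ₗ[ℚ] ℚ := coeffAt (FreeMonoid.of 0)
/-- coefficient of the empty word. -/
def h : A3 →ₗ[ℚ] ℚ := coeffAt 1

lemma f_y (r : Fin 3) : f (y r) = if r = 0 then 1 else 0 := by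
  rw [f, coeffAt_y]
  by_cases hr : r = 0
  · subst hr; simp
  · rw [if_neg fun hw => hr (FreeMonoid.of_injective hw), if_neg hr]

lemma f_one : f (1 : A3) = 0 := by
  rw [f, coeffAt_one, if_neg]; decide

lemma h_one : h (1 : A3) = 1 := by
  rw [h, coeffAt_one, if_pos rfl]

lemma h_y (r : Fin 3) : h (y r) = 0 := by
  rw [h, coeffAt_y, if_neg]
  revert r; decide

lemma f_yy (r s : Fin 3) : f (y r * y s) = 0 := by
  rw [f, coeffAt_yy, if_neg]
  revert r s; decide

/-- pairing of two functionals on the tensor square -/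
def Φ (a b : A3 →ₗ[ℚ] ℚ) : A3 ⊗[ℚ] A3 →ₗ[ℚ] ℚ :=
  (LinearMap.mul' ℚ ℚ) ∘ₗ TensorProduct.map a b

lemma Φ_tmul (a b : A3 →ₗ[ℚ] ℚ) (u v : A3) : Φ a b (u ⊗ₜ[ℚ] v) = a u * b v := by
  simp [Φ]

def wgen : Fin 3 ⊕ Fin 3 → A3 ⊗[ℚ] A3
  | Sum.inl k => y k ⊗ₜ[ℚ] 1
  | Sum.inr k => (1 : A3) ⊗ₜ[ℚ] y k

def T : Submodule ℚ (A3 ⊗[ℚ] A3) := Submodule.span ℚ (Set.range wgen)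

lemma tmul_one_mem_T {m : A3} (hm : m ∈ A3one) : m ⊗ₜ[ℚ] (1 : A3) ∈ T := by
  let L : A3 →ₗ[ℚ] A3 ⊗[ℚ] A3 := (TensorProduct.mk ℚ A3 A3).flip 1
  have : L m ∈ Submodule.map L A3one := Submodule.mem_map_of_mem hm
  rw [A3one, Submodule.map_span] at this
  refine Submodule.span_mono ?_ this
  rintro _ ⟨_, ⟨k, rfl⟩, rfl⟩
  exact ⟨Sum.inl k, rfl⟩

lemma one_tmul_mem_T {m : A3} (hm : m ∈ A3one) : (1 : A3) ⊗ₜ[ℚ] m ∈ T := by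
  let L : A3 →ₗ[ℚ] A3 ⊗[ℚ] A3 := TensorProduct.mk ℚ A3 A3 1
  have : L m ∈ Submodule.map L A3one := Submodule.mem_map_of_mem hm
  rw [A3one, Submodule.map_span] at this
  refine Submodule.span_mono ?_ this
  rintro _ ⟨_, ⟨k, rfl⟩, rfl⟩
  exact ⟨Sum.inr k, rfl⟩

lemma P10_le : P 1 0 ≤ T := by
  rw [P, TensorProduct.range_map_eq_span_tmul, Submodule.span_le]
  rintro _ ⟨m, n, rfl⟩
  obtain ⟨c, hc⟩ := Submodule.mem_span_singleton.mp
    (by simpa [deg, Submodule.one_eq_span] using n.2 : (n : A3) ∈ Submodule.span ℚ {(1:A3)})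
  have hm : (m : A3) ∈ A3one := by simpa [deg] using m.2
  simp only [Submodule.coe_subtype]
  rw [← hc, TensorProduct.tmul_smul]
  exact T.smul_mem c (tmul_one_mem_T hm)

lemma P01_le : P 0 1 ≤ T := by
  rw [P, TensorProduct.range_map_eq_span_tmul, Submodule.span_le]
  rintro _ ⟨m, n, rfl⟩
  obtain ⟨c, hc⟩ := Submodule.mem_span_singleton.mp
    (by simpa [deg, Submodule.one_eq_span] using m.2 : (m : A3) ∈ Submodule.span ℚ {(1:A3)})
  have hn : (n : A3) ∈ A3one := by simpa [deg] using n.2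
  simp only [Submodule.coe_subtype]
  rw [← hc, TensorProduct.smul_tmul, TensorProduct.tmul_smul]
  exact T.smul_mem c (one_tmul_mem_T hn)

theorem stmt11 :
    ¬ ∃ (Δ : A3 →ₐ[ℚ] A3 ⊗[ℚ] A3) (ε : A3 →ₐ[ℚ] ℚ),
      (∀ n : ℕ, ∀ a ∈ deg n, Δ a ∈ ⨆ (p : ℕ × ℕ) (_ : p.1 + p.2 = n), P p.1 p.2) ∧
      (∀ a : A3, (Algebra.TensorProduct.assoc ℚ ℚ ℚ A3 A3 A3)
          ((Algebra.TensorProduct.map Δ (AlgHom.id ℚ A3)) (Δ a)) =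
        (Algebra.TensorProduct.map (AlgHom.id ℚ A3) Δ) (Δ a)) ∧
      (∀ a : A3, (Algebra.TensorProduct.lid ℚ A3)
          ((Algebra.TensorProduct.map ε (AlgHom.id ℚ A3)) (Δ a)) = a) ∧
      (∀ a : A3, (Algebra.TensorProduct.rid ℚ ℚ A3)
          ((Algebra.TensorProduct.map (AlgHom.id ℚ A3) ε) (Δ a)) = a) ∧
      Δ e1 = e1 ⊗ₜ[ℚ] 1 + 1 ⊗ₜ[ℚ] e1 ∧
      Δ e2 = e2 ⊗ₜ[ℚ] 1 + e1 ⊗ₜ[ℚ] e1 + 1 ⊗ₜ[ℚ] e2 ∧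
      Δ e3 = e3 ⊗ₜ[ℚ] 1 + e2 ⊗ₜ[ℚ] e1 + e1 ⊗ₜ[ℚ] e2 + 1 ⊗ₜ[ℚ] e3 := by
  rintro ⟨Δ, ε, hgrad, -, hlid, hrid, -, he2, -⟩
  -- Δ (y i) lies in T
  have hΔT : ∀ i : Fin 3, Δ (y i) ∈ T := by
    intro i
    have hy1 : y i ∈ deg 1 := by
      rw [deg, pow_one]; exact Submodule.subset_span ⟨i, rfl⟩
    have := hgrad 1 (y i) hy1
    refine (iSup_le fun p => iSup_le fun hp => ?_ : (_ : Submodule ℚ _) ≤ T) this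
    obtain ⟨a, b⟩ := p
    have : (a = 0 ∧ b = 1) ∨ (a = 1 ∧ b = 0) := by omega
    rcases this with ⟨rfl, rfl⟩ | ⟨rfl, rfl⟩
    · exact P01_le
    · exact P10_le
  -- counit identities on T
  have hψ1 : ∀ i : Fin 3, Φ f h (Δ (y i)) = f (y i) := by
    intro i
    have key : ∀ t ∈ T, Φ f h t =
        f ((Algebra.TensorProduct.rid ℚ ℚ A3)
          ((Algebra.TensorProduct.map (AlgHom.id ℚ A3) ε) t)) := by
      intro t ht
      induction ht using Submodule.span_induction with
      | mem x hx =>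
        obtain ⟨k, rfl⟩ := hx
        cases k with
        | inl k =>
          simp [wgen, Φ_tmul, Algebra.TensorProduct.rid_tmul, h_one, f_one]
        | inr k =>
          simp [wgen, Φ_tmul, Algebra.TensorProduct.rid_tmul, h_y, f_one]
      | zero => simp
      | add u v hu hv ihu ihv => simp [map_add, ihu, ihv]
      | smul c u hu ihu => simp [map_smul, ihu]
    rw [key _ (hΔT i), hrid (y i)]
  have hψ2 : ∀ i : Fin 3, Φ h f (Δ (y i)) = f (y i) := by
    intro i
    have key : ∀ t ∈ T, Φ h f t =
        f ((Algebra.TensorProduct.lid ℚ A3)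
          ((Algebra.TensorProduct.map ε (AlgHom.id ℚ A3)) t)) := by
      intro t ht
      induction ht using Submodule.span_induction with
      | mem x hx =>
        obtain ⟨k, rfl⟩ := hx
        cases k with
        | inl k =>
          simp [wgen, Φ_tmul, Algebra.TensorProduct.lid_tmul, h_y, f_one]
        | inr k =>
          simp [wgen, Φ_tmul, Algebra.TensorProduct.lid_tmul, h_one, f_one]
      | zero => simp
      | add u v hu hv ihu ihv => simp [map_add, ihu, ihv]
      | smul c u hu ihu => simp [map_smul, ihu]
    rw [key _ (hΔT i), hlid (y i)]
  -- product rule on T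
  have hprod : ∀ u ∈ T, ∀ v ∈ T,
      Φ f f (u * v) = Φ f h u * Φ h f v + Φ h f u * Φ f h v := by
    intro u hu v hv
    induction hu, hv using Submodule.span_induction₂ with
    | mem_mem x z hx hz =>
      obtain ⟨k, rfl⟩ := hx
      obtain ⟨l, rfl⟩ := hz
      cases k <;> cases l <;>
        simp [wgen, Algebra.TensorProduct.tmul_mul_tmul, Φ_tmul, f_one, h_one, h_y, f_yy] <;>
        ring
    | zero_left z hz => simp
    | zero_right x hx => simp
    | add_left x z w hx hz hw ih1 ih2 => simp only [add_mul, map_add, ih1, ih2]; ring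
    | add_right x z w hx hz hw ih1 ih2 => simp only [mul_add, map_add, ih1, ih2]; ring
    | smul_left c x z hx hz ih => simp only [smul_mul_assoc, map_smul, ih, smul_eq_mul]; ring
    | smul_right c x z hx hz ih => simp only [mul_smul_comm, map_smul, ih, smul_eq_mul]; ring
  -- apply Φ f f to the e2 relation
  have lhs : Φ f f (Δ e2) = 0 := by
    have expand : Δ e2 = Δ (y 2) * Δ (y 1) + Δ (y 2) * Δ (y 0) + Δ (y 1) * Δ (y 0) := by
      rw [e2]; simp [map_add, map_mul]
    rw [expand, map_add, map_add,
      hprod _ (hΔT 2) _ (hΔT 1), hprod _ (hΔT 2) _ (hΔT 0), hprod _ (hΔT 1) _ (hΔT 0),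
      hψ1 0, hψ1 1, hψ1 2, hψ2 0, hψ2 1, hψ2 2]
    simp [f_y]
  have rhs : Φ f f (e2 ⊗ₜ[ℚ] 1 + e1 ⊗ₜ[ℚ] e1 + 1 ⊗ₜ[ℚ] e2) = 1 := by
    have fe1 : f e1 = 1 := by simp [e1, f_y]
    simp [map_add, Φ_tmul, f_one, fe1]
  rw [he2, rhs] at lhs
  exact one_ne_zero lhs

end
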